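/- arXiv:1110.1849 — 5 statements merged into one kernel-verified Lean document; each statement's English description precedes it below -/
import Mathlib

section
/- Let Q be a finite connected quandle whose underlying set is {1,2,…,n} and whose elements are naturally ordered (so that the quandle matrix of Q is in canonical form). Then every automorphism of Q is a natural reordering (namely, an automorphism ν is a natural reordering with respect to r_{ν^{-1}(n)}). -/
/-- A quandle structure on a set `Q`: a binary operation `op` that is idempotent,
right-invertible (each right translation `r_b : x ↦ x * b` is a bijection) and
right-distributive. -/
structure QuandleOp (Q : Type*) where
  op : Q → Q → Q
  op_self : ∀ a, op a a = a
  op_bijective : ∀ b, Function.Bijective fun a => op a b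
  op_distrib : ∀ a b c, op (op a b) c = op (op a c) (op b c)

namespace QuandleOp

/-- The right translation `r_b : x ↦ x * b`, as a permutation of `Q`. -/
noncomputable def r {Q : Type*} (S : QuandleOp Q) (b : Q) : Equiv.Perm Q :=
  Equiv.ofBijective _ (S.op_bijective b)

/-- A quandle is connected if every element can be taken to every other element by a
finite composition of the maps `r_b` and their inverses, i.e. by an element of the
subgroup of permutations generated by the `r_b`. -/
def Connected {Q : Type*} (S : QuandleOp Q) : Prop :=
  ∀ a b : Q, ∃ g ∈ Subgroup.closure (Set.range S.r), g a = b

end QuandleOp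

/-- The element `n` of the quandle `{1, …, n}` modelled as `Fin n` (element `m`
corresponds to the index `m - 1`). -/
def theTop (n : ℕ) [NeZero n] : Fin n :=
  ⟨n - 1, Nat.sub_lt (Nat.pos_of_ne_zero (NeZero.ne n)) Nat.one_pos⟩

/-- `ν` is a natural reordering with respect to `r q`, realized by the presentation of
`r q` as the product of the disjoint cycles `(I s 0  I s 1 … I s (ℓ s - 1))` for
`s = 0, …, k-1` together with the fixed point `(q)`, where `1 ≤ ℓ 0 ≤ ⋯ ≤ ℓ (k-1)`:
it sends `q` to the top element `n` (index `n - 1`) and sends the `t`-th entry of the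
`s`-th cycle to the element with index `(ℓ 0 + ⋯ + ℓ (s-1)) + t`. -/
def IsNaturalReorderingWith {n : ℕ} (S : QuandleOp (Fin n)) (q : Fin n)
    (ν : Equiv.Perm (Fin n)) {k : ℕ} (ℓ : Fin k → ℕ)
    (I : (s : Fin k) → Fin (ℓ s) → Fin n) : Prop :=
  (ν q).val = n - 1 ∧
  (∀ s, 1 ≤ ℓ s) ∧
  Monotone ℓ ∧
  (∑ s, ℓ s) = n - 1 ∧
  Function.Injective (fun p : (s : Fin k) × Fin (ℓ s) => I p.1 p.2) ∧
  (∀ (s : Fin k) (t : Fin (ℓ s)), I s t ≠ q) ∧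
  (∀ (s : Fin k) (t : Fin (ℓ s)),
    S.op (I s t) q = I s ⟨(t.val + 1) % ℓ s, Nat.mod_lt _ (Nat.zero_lt_of_lt t.isLt)⟩) ∧
  (∀ (s : Fin k) (t : Fin (ℓ s)),
    (ν (I s t)).val = (∑ j ∈ Finset.Iio s, ℓ j) + t.val)

/-- `ν` is a natural reordering with respect to `r q` (for some presentation of `r q`
as a product of disjoint cycles of weakly increasing lengths, together with `(q)`). -/
def IsNaturalReordering {n : ℕ} (S : QuandleOp (Fin n)) (q : Fin n)
    (ν : Equiv.Perm (Fin n)) : Prop :=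
  ∃ (k : ℕ) (ℓ : Fin k → ℕ) (I : (s : Fin k) → Fin (ℓ s) → Fin n),
    IsNaturalReorderingWith S q ν ℓ I

/-- The elements of the quandle are naturally ordered with cycle lengths `ℓ`:
`r n` is decomposed into disjoint cycles in form (N), i.e. the identity reordering is a
natural reordering with respect to `r n` with cycle lengths `ℓ`.  (This also says that
the profile of the quandle is `{1, ℓ 0, …, ℓ (k-1)}`.) -/
def NaturallyOrderedWith {n : ℕ} [NeZero n] (S : QuandleOp (Fin n)) {k : ℕ}
    (ℓ : Fin k → ℕ) : Prop :=
  ∃ I, IsNaturalReorderingWith S (theTop n) (Equiv.refl (Fin n)) ℓ I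

/-- The elements of the quandle are naturally ordered (the quandle matrix is in
canonical form). -/
def NaturallyOrdered {n : ℕ} [NeZero n] (S : QuandleOp (Fin n)) : Prop :=
  ∃ (k : ℕ) (ℓ : Fin k → ℕ), NaturallyOrderedWith S ℓ

/-- The quandle operation (equivalently, the quandle matrix) obtained after reordering
the elements by the bijection `ν`: the new matrix has entry `ν (i * j)` in row `ν i`
and column `ν j`. -/
def reorderedOp {n : ℕ} (S : QuandleOp (Fin n)) (ν : Equiv.Perm (Fin n)) :
    Fin n → Fin n → Fin n :=
  fun i j => ν (S.op (ν.symm i) (ν.symm j))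

/-- Theorem 1 of the paper: if the elements of a finite connected
quandle on `{1,…,n}` are naturally ordered, then every automorphism `ν` of the quandle
is a natural reordering, namely with respect to `r (ν⁻¹ n)`. -/
theorem every_automorphism_is_natural_reordering
    {n : ℕ} [NeZero n] (S : QuandleOp (Fin n)) (hconn : S.Connected)
    (hord : NaturallyOrdered S) (ν : Equiv.Perm (Fin n))
    (hauto : ∀ a b, ν (S.op a b) = S.op (ν a) (ν b)) :
    IsNaturalReordering S (ν.symm (theTop n)) ν := by
  obtain ⟨k, ℓ, I, h1, h2, h3, h4, h5, h6, h7, h8⟩ := hord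
  refine ⟨k, ℓ, fun s t => ν.symm (I s t), ?_, h2, h3, h4, ?_, ?_, ?_, ?_⟩
  · simpa using h1
  · intro p q hpq
    exact h5 (ν.symm.injective hpq)
  · intro s t h
    exact h6 s t (ν.symm.injective (by simpa using h))
  · intro s t
    apply ν.injective
    rw [hauto]
    simp only [Equiv.apply_symm_apply]
    exact h7 s t
  · intro s t
    simpa using h8 s t
end

section
/- Let Q be a finite connected quandle with its elements {1,2,…,n} naturally ordered and with profile {1, ℓ_1, ℓ_2, …, ℓ_k}, where 1 ≤ ℓ_1 ≤ ℓ_2 ≤ ⋯ ≤ ℓ_k. For any reordering μ which is natural with respect to r_q for some q ∈ Q, there is a natural reordering ν with respect to r_n such that the quandle matrices after reordering by μ and by ν coincide. Moreover, ν can be taken so that, for some integer m with 1 ≤ m ≤ k and ℓ_m = ℓ_k, one has ν((ℓ_1+⋯+ℓ_{m-1})+i) = (ℓ_1+⋯+ℓ_{k-1})+i for every integer i with 1 ≤ i ≤ ℓ_m. -/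
namespace QuandleOp

variable {n : ℕ} (S : QuandleOp (Fin n))

lemma r_apply (b a : Fin n) : S.r b a = S.op a b := rfl

lemma closure_hom {g : Equiv.Perm (Fin n)} (hg : g ∈ Subgroup.closure (Set.range S.r)) :
    ∀ a b, g (S.op a b) = S.op (g a) (g b) := by
  induction hg using Subgroup.closure_induction with
  | mem x hx =>
    obtain ⟨c, rfl⟩ := hx
    intro a b
    simp only [r_apply]
    exact S.op_distrib a b c
  | one => intro a b; rfl
  | mul x y hx hy ihx ihy =>
    intro a b
    simp only [Equiv.Perm.mul_apply, ihy, ihx]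
  | inv x hx ih =>
    intro a b
    have h1 : x (S.op (x⁻¹ a) (x⁻¹ b)) = S.op a b := by
      rw [ih]; simp
    have := congrArg (x⁻¹ : Equiv.Perm (Fin n)) h1
    simpa using this.symm

lemma coverage {q : Fin n} {k : ℕ} {ℓ : Fin k → ℕ} {I : (s : Fin k) → Fin (ℓ s) → Fin n}
    (hsum : (∑ s, ℓ s) = n - 1)
    (hinj : Function.Injective (fun p : (s : Fin k) × Fin (ℓ s) => I p.1 p.2))
    (hne : ∀ s t, I s t ≠ q) :
    ∀ x : Fin n, x ≠ q → ∃ s t, I s t = x := by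
  have hn : 0 < n := q.pos
  classical
  set F : ((s : Fin k) × Fin (ℓ s)) → {x : Fin n // x ≠ q} :=
    fun p => ⟨I p.1 p.2, hne p.1 p.2⟩ with hF
  have hFinj : Function.Injective F := by
    intro a b h
    exact hinj (congrArg Subtype.val h)
  have hcard : Fintype.card ((s : Fin k) × Fin (ℓ s)) = Fintype.card {x : Fin n // x ≠ q} := by
    rw [Fintype.card_sigma]
    simp only [Fintype.card_fin]
    rw [hsum]
    rw [Fintype.card_subtype_compl, Fintype.card_subtype_eq, Fintype.card_fin]
  have hFbij : Function.Bijective F :=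
    (Fintype.bijective_iff_injective_and_card F).2 ⟨hFinj, hcard⟩
  intro x hx
  obtain ⟨⟨s, t⟩, hst⟩ := hFbij.2 ⟨x, hx⟩
  exact ⟨s, t, congrArg Subtype.val hst⟩

lemma transport {q p : Fin n} {g : Equiv.Perm (Fin n)}
    (hg : ∀ a b, g (S.op a b) = S.op (g a) (g b)) (hgq : g q = p)
    {ℓ₁ : ℕ} {I₁ : Fin ℓ₁ → Fin n} (h1 : 0 < ℓ₁)
    (cyc₁ : ∀ t : Fin ℓ₁, S.op (I₁ t) q = I₁ ⟨(t.val + 1) % ℓ₁, Nat.mod_lt _ (Nat.zero_lt_of_lt t.isLt)⟩)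
    {ℓ₂ : ℕ} {I₂ : Fin ℓ₂ → Fin n} (h2 : 0 < ℓ₂)
    (cyc₂ : ∀ t : Fin ℓ₂, S.op (I₂ t) p = I₂ ⟨(t.val + 1) % ℓ₂, Nat.mod_lt _ (Nat.zero_lt_of_lt t.isLt)⟩)
    (inj₁ : Function.Injective I₁) (inj₂ : Function.Injective I₂)
    {t₀ : Fin ℓ₂} (h0 : g (I₁ ⟨0, h1⟩) = I₂ t₀) :
    (∀ t : Fin ℓ₁, g (I₁ t) = I₂ ⟨(t₀.val + t.val) % ℓ₂, Nat.mod_lt _ h2⟩) ∧ ℓ₁ = ℓ₂ := by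
  have key : ∀ t : ℕ, g (I₁ ⟨t % ℓ₁, Nat.mod_lt _ h1⟩) = I₂ ⟨(t₀.val + t) % ℓ₂, Nat.mod_lt _ h2⟩ := by
    intro t
    induction t with
    | zero =>
      have : (t₀.val + 0) % ℓ₂ = t₀.val := by
        simp [Nat.mod_eq_of_lt t₀.isLt]
      rw [show (⟨(t₀.val + 0) % ℓ₂, Nat.mod_lt _ h2⟩ : Fin ℓ₂) = t₀ from Fin.ext this]
      exact h0
    | succ t ih =>
      have e1 : I₁ ⟨(t + 1) % ℓ₁, Nat.mod_lt _ h1⟩ =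
          S.op (I₁ ⟨t % ℓ₁, Nat.mod_lt _ h1⟩) q := by
        rw [cyc₁]
        congr 1
        exact Fin.ext (by simp [Nat.mod_add_mod])
      rw [e1, hg, hgq, ih, cyc₂]
      congr 1
      exact Fin.ext (by simp [Nat.mod_add_mod, Nat.add_assoc])
  have keyFin : ∀ t : Fin ℓ₁, g (I₁ t) = I₂ ⟨(t₀.val + t.val) % ℓ₂, Nat.mod_lt _ h2⟩ := by
    intro t
    have := key t.val
    rwa [show (⟨t.val % ℓ₁, Nat.mod_lt _ h1⟩ : Fin ℓ₁) = t from Fin.ext (Nat.mod_eq_of_lt t.isLt)]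
      at this
  refine ⟨keyFin, ?_⟩
  -- wraparound : ℓ₂ ∣ ℓ₁
  have hwrap : t₀.val = (t₀.val + ℓ₁) % ℓ₂ := by
    have e := key ℓ₁
    rw [show (⟨ℓ₁ % ℓ₁, Nat.mod_lt _ h1⟩ : Fin ℓ₁) = ⟨0, h1⟩ from Fin.ext (Nat.mod_self _),
      h0] at e
    exact congrArg Fin.val (inj₂ e)
  have hdvd : ℓ₂ ∣ ℓ₁ := by
    have h3 : ℓ₁ % ℓ₂ < ℓ₂ := Nat.mod_lt _ h2
    have h4 : (t₀.val + ℓ₁) % ℓ₂ = (t₀.val + ℓ₁ % ℓ₂) % ℓ₂ := by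
      rw [Nat.add_mod_mod]
    have h5 : t₀.val < ℓ₂ := t₀.isLt
    rcases Nat.lt_or_ge (t₀.val + ℓ₁ % ℓ₂) ℓ₂ with hc | hc
    · have : (t₀.val + ℓ₁ % ℓ₂) % ℓ₂ = t₀.val + ℓ₁ % ℓ₂ := Nat.mod_eq_of_lt hc
      exact Nat.dvd_of_mod_eq_zero (by omega)
    · have h6 : t₀.val + ℓ₁ % ℓ₂ < 2 * ℓ₂ := by omega
      have : (t₀.val + ℓ₁ % ℓ₂) % ℓ₂ = t₀.val + ℓ₁ % ℓ₂ - ℓ₂ := by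
        rw [Nat.mod_eq_sub_mod hc, Nat.mod_eq_of_lt (by omega)]
      exact Nat.dvd_of_mod_eq_zero (by omega)
  -- ℓ₁ ≤ ℓ₂
  have hle : ℓ₁ ≤ ℓ₂ := by
    by_contra hlt
    push_neg at hlt
    have e := key ℓ₂
    have e2 : (t₀.val + ℓ₂) % ℓ₂ = t₀.val := by
      rw [Nat.add_mod_right, Nat.mod_eq_of_lt t₀.isLt]
    rw [show (⟨(t₀.val + ℓ₂) % ℓ₂, Nat.mod_lt _ h2⟩ : Fin ℓ₂) = t₀ from Fin.ext e2, ← h0] at e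
    have := inj₁ (g.injective e)
    have := congrArg Fin.val this
    simp only [Nat.mod_eq_of_lt hlt] at this
    omega
  have := Nat.le_of_dvd h1 hdvd
  omega

lemma r_pow_fix (q : Fin n) : ∀ j : ℕ, ((S.r q) ^ j) q = q := by
  intro j
  induction j with
  | zero => rfl
  | succ j ih =>
    rw [pow_succ, Equiv.Perm.mul_apply, r_apply, S.op_self, ih]

lemma r_pow_cycle {q : Fin n} {ℓ₁ : ℕ} {I₁ : Fin ℓ₁ → Fin n}
    (cyc₁ : ∀ t : Fin ℓ₁, S.op (I₁ t) q = I₁ ⟨(t.val + 1) % ℓ₁, Nat.mod_lt _ (Nat.zero_lt_of_lt t.isLt)⟩)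
    (h1 : 0 < ℓ₁) :
    ∀ (j : ℕ) (t : Fin ℓ₁), ((S.r q) ^ j) (I₁ t) = I₁ ⟨(t.val + j) % ℓ₁, Nat.mod_lt _ h1⟩ := by
  intro j
  induction j with
  | zero =>
    intro t
    simp [Nat.mod_eq_of_lt t.isLt]
  | succ j ih =>
    intro t
    rw [pow_succ', Equiv.Perm.mul_apply, ih, r_apply, cyc₁]
    congr 1
    exact Fin.ext (by simp [Nat.mod_add_mod, Nat.add_assoc])

lemma sum_Iio_last {k : ℕ} (hk : 0 < k) (ℓ : Fin k → ℕ) :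
    ∑ j ∈ Finset.Iio (⟨k - 1, Nat.sub_lt hk Nat.one_pos⟩ : Fin k), ℓ j
      = (∑ j, ℓ j) - ℓ ⟨k - 1, Nat.sub_lt hk Nat.one_pos⟩ := by
  classical
  have hset : Finset.Iio (⟨k - 1, by omega⟩ : Fin k)
      = Finset.univ.erase ⟨k - 1, by omega⟩ := by
    ext j
    simp only [Finset.mem_Iio, Finset.mem_erase, Finset.mem_univ, and_true]
    constructor
    · intro h
      intro he
      rw [he] at h
      exact lt_irrefl _ h
    · intro h
      have hj := j.isLt
      have : j.val ≠ k - 1 := fun hc => h (Fin.ext hc)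
      exact Fin.lt_def.2 (by simp; omega)
  rw [hset]
  have := Finset.sum_erase_add Finset.univ ℓ (Finset.mem_univ (⟨k - 1, by omega⟩ : Fin k))
  omega

end QuandleOp

/-- Theorem 2 of the paper: let the elements of a finite connected
quandle on `{1,…,n}` be naturally ordered, with profile `{1, ℓ 0, …, ℓ (k-1)}`.
For any reordering `μ` natural with respect to some `r q`, there is a reordering `ν`
natural with respect to `r n` producing the same reordered quandle matrix as `μ`;
moreover `ν` can be taken so that for some `m` with `ℓ m = ℓ (k-1)`, `ν` sends the
element with index `(ℓ 0 + ⋯ + ℓ (m-1)) + i` to the element with index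
`(ℓ 0 + ⋯ + ℓ (k-2)) + i` for every `i < ℓ m`. -/
theorem exists_natural_reordering_same_matrix
    {n k : ℕ} [NeZero n] (hk : 0 < k) (S : QuandleOp (Fin n)) (hconn : S.Connected)
    (ℓ : Fin k → ℕ) (hord : NaturallyOrderedWith S ℓ)
    (q : Fin n) (μ : Equiv.Perm (Fin n)) (hμ : IsNaturalReordering S q μ) :
    ∃ ν : Equiv.Perm (Fin n),
      IsNaturalReordering S (theTop n) ν ∧
      (∀ i j, reorderedOp S μ i j = reorderedOp S ν i j) ∧
      ∃ m : Fin k, ℓ m = ℓ ⟨k - 1, by omega⟩ ∧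
        ∀ i : ℕ, i < ℓ m → ∀ a : Fin n,
          a.val = (∑ j ∈ Finset.Iio m, ℓ j) + i →
          (ν a).val = (∑ j ∈ Finset.Iio (⟨k - 1, by omega⟩ : Fin k), ℓ j) + i := by
  classical
  obtain ⟨I, _hI1, hI2, hI3, hI4, hI5, hI6, hI7, hI8⟩ := hord
  obtain ⟨k', ℓ', I', hJ1, hJ2, hJ3, hJ4, hJ5, hJ6, hJ7, hJ8⟩ := hμ
  have hn1 : 0 < n := Nat.pos_of_ne_zero (NeZero.ne n)
  have hksum : k ≤ ∑ s, ℓ s := by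
    calc k = ∑ _s : Fin k, 1 := by simp
    _ ≤ ∑ s, ℓ s := Finset.sum_le_sum (fun s _ => hI2 s)
  have hn2 : 2 ≤ n := by omega
  have hk' : 0 < k' := by
    rcases Nat.eq_zero_or_pos k' with h | h
    · subst h
      simp at hJ4
      omega
    · exact h
  obtain ⟨g, hgmem, hgq⟩ := hconn q (theTop n)
  have homg := S.closure_hom hgmem
  have injI : ∀ s, Function.Injective (I s) := by
    intro s a b h
    have h2 : (⟨s, a⟩ : (s : Fin k) × Fin (ℓ s)) = ⟨s, b⟩ := hI5 h
    exact @sigma_mk_injective (Fin k) (fun i => Fin (ℓ i)) s a b h2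
  have injI' : ∀ s, Function.Injective (I' s) := by
    intro s a b h
    have h2 : (⟨s, a⟩ : (s : Fin k') × Fin (ℓ' s)) = ⟨s, b⟩ := hJ5 h
    exact @sigma_mk_injective (Fin k') (fun i => Fin (ℓ' i)) s a b h2
  set lastk : Fin k := ⟨k - 1, by omega⟩ with hlastk
  set last' : Fin k' := ⟨k' - 1, by omega⟩ with hlast'
  have covI := QuandleOp.coverage hI4 hI5 hI6
  have covI' := QuandleOp.coverage hJ4 hJ5 hJ6
  -- first transport : the last cycle of I' maps to some cycle m of I
  have hx0 : g (I' last' ⟨0, hJ2 last'⟩) ≠ theTop n := by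
    intro h
    rw [← hgq] at h
    exact hJ6 last' _ (g.injective h)
  obtain ⟨m, t₀, hmt₀⟩ := covI _ hx0
  obtain ⟨ta, tb⟩ := S.transport homg hgq (hJ2 last') (hJ7 last') (hI2 m) (hI7 m)
    (injI' last') (injI m) hmt₀.symm
  -- second transport : the last cycle of I comes from some cycle s₁ of I'
  have hy0 : g⁻¹ (I lastk ⟨0, hI2 lastk⟩) ≠ q := by
    intro h
    apply hI6 lastk ⟨0, hI2 lastk⟩
    have := congrArg g h
    rwa [Equiv.Perm.inv_def, Equiv.apply_symm_apply, hgq] at this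
  obtain ⟨s₁, u₁, hs₁⟩ := covI' _ hy0
  have hz0 : g (I' s₁ ⟨0, hJ2 s₁⟩) ≠ theTop n := by
    intro h
    rw [← hgq] at h
    exact hJ6 s₁ _ (g.injective h)
  obtain ⟨m₁, t₁, hm₁⟩ := covI _ hz0
  obtain ⟨ta₁, tb₁⟩ := S.transport homg hgq (hJ2 s₁) (hJ7 s₁) (hI2 m₁) (hI7 m₁)
    (injI' s₁) (injI m₁) hm₁.symm
  have e₁ : g (I' s₁ u₁) = I lastk ⟨0, hI2 lastk⟩ := by
    rw [hs₁]
    exact g.apply_symm_apply _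
  have e₂ := (ta₁ u₁).symm.trans e₁
  have e₃ : (⟨m₁, ⟨(t₁.val + u₁.val) % ℓ m₁, Nat.mod_lt _ (hI2 m₁)⟩⟩ :
      (s : Fin k) × Fin (ℓ s)) = ⟨lastk, ⟨0, hI2 lastk⟩⟩ := hI5 e₂
  have hm₁eq : m₁ = lastk := congrArg Sigma.fst e₃
  have hs₁len : ℓ' s₁ = ℓ lastk := by rw [tb₁, hm₁eq]
  have hmono1 : ℓ m ≤ ℓ lastk := hI3 (by
    rw [Fin.le_def]
    have := m.isLt
    simp only [hlastk]
    omega)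
  have hmono2 : ℓ' s₁ ≤ ℓ' last' := hJ3 (by
    rw [Fin.le_def]
    have := s₁.isLt
    simp only [hlast']
    omega)
  have hlm : ℓ m = ℓ lastk := by omega
  -- the reordering ν
  set P : Equiv.Perm (Fin n) := (S.r q) ^ (t₀ : ℕ) with hP
  have hPmem : P ∈ Subgroup.closure (Set.range S.r) :=
    pow_mem (Subgroup.subset_closure (Set.mem_range_self q)) _
  have homP := S.closure_hom hPmem
  have homPinv := S.closure_hom (inv_mem hPmem)
  have hPq : P q = q := S.r_pow_fix q _
  have hPinvq : P⁻¹ q = q := by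
    conv_lhs => rw [← hPq]
    exact P.symm_apply_apply q
  set ν : Equiv.Perm (Fin n) := μ * P * g⁻¹ with hν
  have hνapp : ∀ x, ν (g x) = μ (P x) := by
    intro x
    simp [hν, Equiv.Perm.mul_apply]
  refine ⟨ν, ?_, ?_, ?_⟩
  · -- naturalness of ν with respect to r (theTop n)
    refine ⟨k', ℓ', fun s t => g (P⁻¹ (I' s t)), ?_, hJ2, hJ3, hJ4, ?_, ?_, ?_, ?_⟩
    · rw [← hgq, hνapp, hPq]
      exact hJ1
    · intro a b h
      simp only at h
      exact hJ5 (Equiv.injective _ (Equiv.injective g h))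
    · intro s t h
      apply hJ6 s t
      have h1 : P⁻¹ (I' s t) = q := g.injective (h.trans hgq.symm)
      have h2 := congrArg P h1
      rwa [Equiv.Perm.inv_def, Equiv.apply_symm_apply, hPq] at h2
    · intro s t
      have key : S.op (P⁻¹ (I' s t)) q = P⁻¹ (S.op (I' s t) q) := by
        rw [homPinv, hPinvq]
      show S.op (g (P⁻¹ (I' s t))) (theTop n) = _
      rw [← hgq, ← homg, key, hJ7]
    · intro s t
      show (ν (g (P⁻¹ (I' s t)))).val = _
      rw [hνapp, Equiv.Perm.inv_def, Equiv.apply_symm_apply]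
      exact hJ8 s t
  · -- same reordered matrix
    intro i j
    have hsymm : ∀ x, ν.symm x = g (P⁻¹ (μ.symm x)) := by
      intro x
      apply ν.injective
      rw [Equiv.apply_symm_apply, hνapp, Equiv.Perm.inv_def, Equiv.apply_symm_apply, Equiv.apply_symm_apply]
    show μ (S.op (μ.symm i) (μ.symm j)) = ν (S.op (ν.symm i) (ν.symm j))
    rw [hsymm, hsymm, ← homg, hνapp, homP, Equiv.Perm.inv_def, Equiv.apply_symm_apply,
      Equiv.apply_symm_apply]
  · -- the block condition
    refine ⟨m, hlm, ?_⟩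
    intro i hi a ha
    have h8 := hI8 m ⟨i, hi⟩
    simp only [Equiv.refl_apply] at h8
    have haI : a = I m ⟨i, hi⟩ := Fin.ext (by rw [ha, h8])
    have hLpos : 0 < ℓ m := hI2 m
    set u : ℕ := (i + ℓ m - t₀.val) % ℓ m with hu
    have huL : u < ℓ' last' := by rw [tb]; exact Nat.mod_lt _ hLpos
    have hval : (t₀.val + u) % ℓ m = i := by
      rw [hu, Nat.add_mod_mod]
      have ht0 : t₀.val < ℓ m := t₀.isLt
      have heq : t₀.val + (i + ℓ m - t₀.val) = i + ℓ m := by omega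
      rw [heq, Nat.add_mod_right, Nat.mod_eq_of_lt hi]
    have hgu : g (I' last' ⟨u, huL⟩) = I m ⟨i, hi⟩ := by
      rw [ta ⟨u, huL⟩]
      exact congrArg (I m) (Fin.ext hval)
    rw [haI, ← hgu, hνapp, hP]
    have hPI := S.r_pow_cycle (hJ7 last') (hJ2 last') t₀.val ⟨u, huL⟩
    rw [hPI, hJ8]
    have hidx : (u + t₀.val) % ℓ' last' = i := by
      rw [tb, Nat.add_comm]
      exact hval
    show ∑ j ∈ Finset.Iio last', ℓ' j + (u + t₀.val) % ℓ' last'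
        = ∑ j ∈ Finset.Iio lastk, ℓ j + i
    rw [hidx]
    have A : ∑ j ∈ Finset.Iio last', ℓ' j = (∑ j, ℓ' j) - ℓ' last' :=
      QuandleOp.sum_Iio_last hk' ℓ'
    have B : ∑ j ∈ Finset.Iio lastk, ℓ j = (∑ j, ℓ j) - ℓ lastk :=
      QuandleOp.sum_Iio_last hk ℓ
    have hgoal : ∑ j ∈ Finset.Iio last', ℓ' j = ∑ j ∈ Finset.Iio lastk, ℓ j := by
      rw [A, B, hJ4, hI4, tb, hlm]
    show ∑ j ∈ Finset.Iio last', ℓ' j + i = ∑ j ∈ Finset.Iio lastk, ℓ j + i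
    rw [hgoal]
end

section
/- Let Q be a finite connected quandle whose underlying set is {1,2,…,n} and whose elements are naturally ordered. Then the set of all natural reorderings with respect to r_n forms a subgroup of the symmetric group on {1,2,…,n}. -/
section Helpers

open Finset

variable {n : ℕ} {S : QuandleOp (Fin n)} {q : Fin n}

private lemma sigma_inj {k : ℕ} {ℓ : Fin k → ℕ} {I : (s : Fin k) → Fin (ℓ s) → Fin n}
    (h5 : Function.Injective (fun p : (s : Fin k) × Fin (ℓ s) => I p.1 p.2))
    {s s' : Fin k} {t : Fin (ℓ s)} {t' : Fin (ℓ s')} (h : I s t = I s' t') :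
    s = s' ∧ HEq t t' := by
  have h' : (⟨s, t⟩ : (s : Fin k) × Fin (ℓ s)) = ⟨s', t'⟩ := h5 h
  exact ⟨congrArg Sigma.fst h', (Sigma.mk.inj_iff.mp h').2⟩

private lemma surjI {k : ℕ} {ℓ : Fin k → ℕ} {I : (s : Fin k) → Fin (ℓ s) → Fin n}
    (h4 : (∑ s, ℓ s) = n - 1)
    (h5 : Function.Injective (fun p : (s : Fin k) × Fin (ℓ s) => I p.1 p.2))
    (h6 : ∀ (s : Fin k) (t : Fin (ℓ s)), I s t ≠ q) :
    ∀ x : Fin n, x ≠ q → ∃ s t, I s t = x := by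
  classical
  intro x hx
  set F : ((s : Fin k) × Fin (ℓ s)) → Fin n := fun p => I p.1 p.2 with hF
  have hcard : (Finset.univ.image F).card = n - 1 := by
    rw [Finset.card_image_of_injective _ h5, Finset.card_univ, Fintype.card_sigma]
    simpa using h4
  have hsub : Finset.univ.image F ⊆ Finset.univ.erase q := by
    intro y hy
    obtain ⟨p, _, rfl⟩ := Finset.mem_image.mp hy
    exact Finset.mem_erase.mpr ⟨h6 p.1 p.2, Finset.mem_univ _⟩
  have hcard2 : (Finset.univ.erase q).card = n - 1 := by
    rw [Finset.card_erase_of_mem (Finset.mem_univ _), Finset.card_univ, Fintype.card_fin]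
  have heq : Finset.univ.image F = Finset.univ.erase q :=
    Finset.eq_of_subset_of_card_le hsub (by omega)
  have hmem : x ∈ Finset.univ.image F := by
    rw [heq]; exact Finset.mem_erase.mpr ⟨hx, Finset.mem_univ _⟩
  obtain ⟨p, _, hp⟩ := Finset.mem_image.mp hmem
  exact ⟨p.1, p.2, hp⟩

private lemma iterI {k : ℕ} {ℓ : Fin k → ℕ} {I : (s : Fin k) → Fin (ℓ s) → Fin n}
    (h7 : ∀ (s : Fin k) (t : Fin (ℓ s)),
      S.op (I s t) q = I s ⟨(t.val + 1) % ℓ s, Nat.mod_lt _ (Nat.zero_lt_of_lt t.isLt)⟩) :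
    ∀ (j : ℕ) (s : Fin k) (t : Fin (ℓ s)),
      (fun x => S.op x q)^[j] (I s t)
        = I s ⟨(t.val + j) % ℓ s, Nat.mod_lt _ (Nat.zero_lt_of_lt t.isLt)⟩ := by
  intro j
  induction j with
  | zero =>
    intro s t
    simp only [Function.iterate_zero, id]
    congr 1
    exact (Fin.ext (by simp [Nat.mod_eq_of_lt t.isLt])).symm
  | succ j ih =>
    intro s t
    rw [Function.iterate_succ_apply]
    show (fun x => S.op x q)^[j] (S.op (I s t) q) = _
    rw [h7 s t, ih]
    congr 1
    apply Fin.ext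
    show ((t.val + 1) % ℓ s + j) % ℓ s = (t.val + (j + 1)) % ℓ s
    rw [Nat.mod_add_mod]
    congr 1
    omega

/-- injectivity in each cycle -/
private lemma injc {k : ℕ} {ℓ : Fin k → ℕ} {I : (s : Fin k) → Fin (ℓ s) → Fin n}
    (h5 : Function.Injective (fun p : (s : Fin k) × Fin (ℓ s) => I p.1 p.2))
    (s : Fin k) : Function.Injective (I s) := by
  intro t t' h
  exact eq_of_heq (sigma_inj h5 h).2

/-- Uniqueness of the (sorted) cycle-length data. -/
private lemma listEq {kA kB : ℕ} {ℓA : Fin kA → ℕ} {ℓB : Fin kB → ℕ}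
    {IA : (s : Fin kA) → Fin (ℓA s) → Fin n} {IB : (s : Fin kB) → Fin (ℓB s) → Fin n}
    {ν μ : Equiv.Perm (Fin n)}
    (hA : IsNaturalReorderingWith S q ν ℓA IA)
    (hB : IsNaturalReorderingWith S q μ ℓB IB) :
    List.ofFn ℓA = List.ofFn ℓB := by
  classical
  obtain ⟨hA1, hA2, hA3, hA4, hA5, hA6, hA7, hA8⟩ := hA
  obtain ⟨hB1, hB2, hB3, hB4, hB5, hB6, hB7, hB8⟩ := hB
  set zA : (s : Fin kA) → Fin (ℓA s) := fun s => ⟨0, hA2 s⟩ with hzA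
  set zB : (s : Fin kB) → Fin (ℓB s) := fun s => ⟨0, hB2 s⟩ with hzB
  have hsurjA := surjI hA4 hA5 hA6
  have hsurjB := surjI hB4 hB5 hB6
  have hw : ∀ s : Fin kA, ∃ (m : Fin kB) (a : Fin (ℓB m)), IB m a = IA s (zA s) :=
    fun s => hsurjB _ (hA6 s (zA s))
  choose σ a ha using hw
  -- the basic star identity
  have star : ∀ (s : Fin kA) (j : ℕ),
      IA s ⟨j % ℓA s, Nat.mod_lt _ (hA2 s)⟩
        = IB (σ s) ⟨((a s).val + j) % ℓB (σ s), Nat.mod_lt _ (hB2 (σ s))⟩ := by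
    intro s j
    have h1 := iterI hA7 j s (zA s)
    have h2 := iterI hB7 j (σ s) (a s)
    rw [ha s] at h2
    rw [h1] at h2
    have e1 : ((zA s).val + j) % ℓA s = j % ℓA s := by simp [hzA]
    have h2' : IA s ⟨j % ℓA s, Nat.mod_lt _ (hA2 s)⟩
        = IB (σ s) ⟨((a s).val + j) % ℓB (σ s), Nat.mod_lt _ (hB2 (σ s))⟩ := by
      rw [← h2]
      congr 1
      exact Fin.ext e1.symm
    exact h2'
  -- each point of cycle s of A equals a point of cycle σ s of B
  have starA : ∀ (s : Fin kA) (t : Fin (ℓA s)),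
      IA s t = IB (σ s) ⟨((a s).val + t.val) % ℓB (σ s), Nat.mod_lt _ (hB2 (σ s))⟩ := by
    intro s t
    have := star s t.val
    rwa [show (⟨t.val % ℓA s, Nat.mod_lt _ (hA2 s)⟩ : Fin (ℓA s)) = t from
      Fin.ext (Nat.mod_eq_of_lt t.isLt)] at this
  -- each point of cycle σ s of B equals a point of cycle s of A
  have starB : ∀ (s : Fin kA) (b : Fin (ℓB (σ s))),
      IB (σ s) b = IA s ⟨(b.val + ℓB (σ s) - (a s).val) % ℓA s, Nat.mod_lt _ (hA2 s)⟩ := by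
    intro s b
    have hj := star s (b.val + ℓB (σ s) - (a s).val)
    have e2 : ((a s).val + (b.val + ℓB (σ s) - (a s).val)) % ℓB (σ s) = b.val := by
      have hlt := (a s).isLt
      have : (a s).val + (b.val + ℓB (σ s) - (a s).val) = b.val + ℓB (σ s) := by omega
      rw [this, Nat.add_mod_right, Nat.mod_eq_of_lt b.isLt]
    rw [show (⟨((a s).val + (b.val + ℓB (σ s) - (a s).val)) % ℓB (σ s),
        Nat.mod_lt _ (hB2 (σ s))⟩ : Fin (ℓB (σ s))) = b from Fin.ext e2] at hj
    exact hj.symm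
  -- lengths are preserved
  have hlen : ∀ s : Fin kA, ℓA s = ℓB (σ s) := by
    intro s
    have le1 : ℓA s ≤ ℓB (σ s) := by
      have : Function.Injective
          (fun t : Fin (ℓA s) =>
            (⟨((a s).val + t.val) % ℓB (σ s), Nat.mod_lt _ (hB2 (σ s))⟩ : Fin (ℓB (σ s)))) := by
        intro t t' h
        apply injc hA5 s
        rw [starA s t, starA s t']
        exact congrArg _ h
      simpa using Fintype.card_le_of_injective _ this
    have le2 : ℓB (σ s) ≤ ℓA s := by
      have : Function.Injective
          (fun b : Fin (ℓB (σ s)) =>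
            (⟨(b.val + ℓB (σ s) - (a s).val) % ℓA s, Nat.mod_lt _ (hA2 s)⟩ : Fin (ℓA s))) := by
        intro b b' h
        apply injc hB5 (σ s)
        rw [starB s b, starB s b']
        exact congrArg _ h
      simpa using Fintype.card_le_of_injective _ this
    omega
  -- σ is injective
  have hinj : Function.Injective σ := by
    intro s s' hσ
    have hb : (a s').val < ℓB (σ s) := by rw [hσ]; exact (a s').isLt
    have hIB : IB (σ s) ⟨(a s').val, hb⟩ = IB (σ s') (a s') := by
      have hsig : (⟨σ s, ⟨(a s').val, hb⟩⟩ : (m : Fin kB) × Fin (ℓB m)) = ⟨σ s', a s'⟩ := by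
        refine Sigma.ext hσ ?_
        rw [Fin.heq_ext_iff (congrArg ℓB hσ)]
      exact congrArg (fun p : (m : Fin kB) × Fin (ℓB m) => IB p.1 p.2) hsig
    have := starB s ⟨(a s').val, hb⟩
    rw [hIB, ha s'] at this
    exact (sigma_inj hA5 this.symm).1
  -- σ is surjective
  have hsurj : Function.Surjective σ := by
    intro m
    obtain ⟨s, t, hst⟩ := hsurjA (IB m (zB m)) (hB6 m (zB m))
    have h1 := iterI hA7 (ℓA s - t.val) s t
    have e3 : (t.val + (ℓA s - t.val)) % ℓA s = 0 := by
      have := t.isLt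
      have : t.val + (ℓA s - t.val) = ℓA s := by omega
      rw [this, Nat.mod_self]
    rw [show (⟨(t.val + (ℓA s - t.val)) % ℓA s, Nat.mod_lt _ (Nat.zero_lt_of_lt t.isLt)⟩ :
      Fin (ℓA s)) = zA s from Fin.ext e3] at h1
    rw [hst] at h1
    have h2 := iterI hB7 (ℓA s - t.val) m (zB m)
    rw [h2] at h1
    -- h1 : IB m ⟨...⟩ = IA s (zA s)
    have h3 := (ha s).trans h1.symm
    exact ⟨s, (sigma_inj hB5 h3).1⟩
  -- conclude via sorted lists
  have hperm : (List.ofFn ℓA : Multiset ℕ) = (List.ofFn ℓB : Multiset ℕ) := by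
    rw [← Fin.univ_val_map, ← Fin.univ_val_map]
    calc Finset.univ.val.map ℓA = Finset.univ.val.map (ℓB ∘ σ) := by
          apply Multiset.map_congr rfl
          intro s _
          exact hlen s
      _ = (Finset.univ.val.map ⇑(Equiv.ofBijective σ ⟨hinj, hsurj⟩)).map ℓB := by
          rw [Multiset.map_map]
          rfl
      _ = Finset.univ.val.map ℓB := by rw [Multiset.map_univ_val_equiv]
  exact List.Perm.eq_of_sortedLE (hA3.sortedLE_ofFn) (hB3.sortedLE_ofFn)
    (Multiset.coe_eq_coe.mp hperm)

end Helpers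
section Main

variable {n : ℕ} [NeZero n] {S : QuandleOp (Fin n)}

private lemma commQ {k : ℕ} {ℓ : Fin k → ℕ}
    {I I₀ : (s : Fin k) → Fin (ℓ s) → Fin n} {ν : Equiv.Perm (Fin n)}
    (hA : IsNaturalReorderingWith S (theTop n) ν ℓ I)
    (hB : IsNaturalReorderingWith S (theTop n) (Equiv.refl (Fin n)) ℓ I₀) :
    ∀ x, ν (S.op x (theTop n)) = S.op (ν x) (theTop n) := by
  obtain ⟨hA1, hA2, hA3, hA4, hA5, hA6, hA7, hA8⟩ := hA
  obtain ⟨hB1, hB2, hB3, hB4, hB5, hB6, hB7, hB8⟩ := hB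
  have hfix : ν (theTop n) = theTop n := Fin.ext hA1
  have hv : ∀ (s : Fin k) (t : Fin (ℓ s)), ν (I s t) = I₀ s t := by
    intro s t
    exact Fin.ext ((hA8 s t).trans (hB8 s t).symm)
  intro x
  by_cases hx : x = theTop n
  · subst hx
    rw [S.op_self, hfix, S.op_self]
  · obtain ⟨s, t, rfl⟩ := surjI hA4 hA5 hA6 x hx
    calc ν (S.op (I s t) (theTop n))
        = ν (I s ⟨(t.val + 1) % ℓ s, Nat.mod_lt _ (Nat.zero_lt_of_lt t.isLt)⟩) := by
          rw [hA7 s t]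
      _ = I₀ s ⟨(t.val + 1) % ℓ s, Nat.mod_lt _ (Nat.zero_lt_of_lt t.isLt)⟩ := hv s _
      _ = S.op (I₀ s t) (theTop n) := (hB7 s t).symm
      _ = S.op (ν (I s t)) (theTop n) := by rw [hv s t]

end Main

/-- Lemma `group` of the paper: let the elements of a finite
connected quandle on `{1,…,n}` be naturally ordered.  Then the set of all natural
reorderings with respect to `r n` is a subgroup of the symmetric group on
`{1,…,n}`. -/
theorem natural_reorderings_form_subgroup
    {n : ℕ} [NeZero n] (S : QuandleOp (Fin n)) (hconn : S.Connected)
    (hord : NaturallyOrdered S) :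
    ∃ H : Subgroup (Equiv.Perm (Fin n)),
      ∀ ν : Equiv.Perm (Fin n), ν ∈ H ↔ IsNaturalReordering S (theTop n) ν := by
  classical
  obtain ⟨k₀, ℓ₀, I₀, h₀⟩ := hord
  -- every natural reordering admits data with the canonical ℓ₀
  have key : ∀ ν : Equiv.Perm (Fin n), IsNaturalReordering S (theTop n) ν →
      ∃ I, IsNaturalReorderingWith S (theTop n) ν ℓ₀ I := by
    rintro ν ⟨k, ℓ, I, h⟩
    have hl := listEq h h₀
    have hk : k = k₀ := by simpa using congrArg List.length hl
    subst hk
    have hℓ : ℓ = ℓ₀ := List.ofFn_inj.mp hl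
    subst hℓ
    exact ⟨I, h⟩
  have hcomm : ∀ ν : Equiv.Perm (Fin n), IsNaturalReordering S (theTop n) ν →
      ∀ x, ν (S.op x (theTop n)) = S.op (ν x) (theTop n) := by
    intro ν hν
    obtain ⟨I, h⟩ := key ν hν
    exact commQ h h₀
  have hfix : ∀ ν : Equiv.Perm (Fin n), IsNaturalReordering S (theTop n) ν →
      ν (theTop n) = theTop n := by
    rintro ν ⟨k, ℓ, I, h⟩
    exact Fin.ext h.1
  refine ⟨{ carrier := {ν | IsNaturalReordering S (theTop n) ν}
          , one_mem' := ?one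
          , mul_mem' := ?mul
          , inv_mem' := ?inv }, fun ν => Iff.rfl⟩
  case one =>
    show IsNaturalReordering S (theTop n) 1
    exact ⟨k₀, ℓ₀, I₀, h₀⟩
  case mul =>
    intro νa νb ha hb
    obtain ⟨I, h⟩ := key νa ha
    obtain ⟨h1, h2, h3, h4, h5, h6, h7, h8⟩ := h
    have hbfix : νb (theTop n) = theTop n := hfix νb hb
    have hbcomm := hcomm νb hb
    have hbcomm' : ∀ x, S.op (νb⁻¹ x) (theTop n) = νb⁻¹ (S.op x (theTop n)) := by
      intro x
      apply νb.injective
      rw [hbcomm (νb⁻¹ x)]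
      simp
    refine ⟨k₀, ℓ₀, fun s t => νb⁻¹ (I s t), ?_, h2, h3, h4, ?_, ?_, ?_, ?_⟩
    · -- value at q
      have : νb⁻¹ (theTop n) = theTop n := by
        apply νb.injective; rw [hbfix]; simp
      show ((νa * νb) (theTop n)).val = n - 1
      rw [Equiv.Perm.mul_apply, hbfix]
      exact h1
    · -- injectivity
      intro p p' hp
      exact h5 (νb⁻¹.injective hp)
    · -- avoids q
      intro s t hq
      apply h6 s t
      have := congrArg νb hq
      simpa [hbfix] using this
    · -- cycle condition
      intro s t
      rw [hbcomm' (I s t), h7 s t]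
    · -- values
      intro s t
      have : (νa * νb) (νb⁻¹ (I s t)) = νa (I s t) := by
        rw [Equiv.Perm.mul_apply]; simp
      rw [this]
      exact h8 s t
  case inv =>
    intro ν hν
    obtain ⟨h1, h2, h3, h4, h5, h6, h7, h8⟩ := h₀
    have hvfix : ν (theTop n) = theTop n := hfix ν hν
    have hvcomm := hcomm ν hν
    refine ⟨k₀, ℓ₀, fun s t => ν (I₀ s t), ?_, h2, h3, h4, ?_, ?_, ?_, ?_⟩
    · show (ν⁻¹ (theTop n)).val = n - 1
      have h9 : ν⁻¹ (theTop n) = theTop n := by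
        apply ν.injective; rw [hvfix]; simp
      rw [h9]
      rfl
    · intro p p' hp
      exact h5 (ν.injective hp)
    · intro s t hq
      apply h6 s t
      have : I₀ s t = ν⁻¹ (theTop n) := by rw [← hq]; simp
      rw [this]
      apply ν.injective; rw [hvfix]; simp
    · intro s t
      rw [← hvcomm (I₀ s t), h7 s t]
    · intro s t
      have : ν⁻¹ (ν (I₀ s t)) = I₀ s t := by simp
      rw [this]
      exact h8 s t
end

section
/- Let Q be a connected quandle with n elements whose profile is {1, n-1}, i.e., for each q ∈ Q the permutation r_q is the product of a single cycle of length n-1 and the fixed point q. Then Q is latin: for every i ∈ Q the map l_i : Q → Q, l_i(x) = i*x, is a bijection. Equivalently, every row of the quandle matrix of Q contains all the elements of Q. -/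
section Aux

variable {n : ℕ} (S : QuandleOp (Fin n))

lemma r_apply (b x : Fin n) : S.r b x = S.op x b := rfl

/-- If every `r q` has support of size `n - 1`, then `q` is its unique fixed point. -/
lemma fixed_eq
    (hprofile : ∀ q : Fin n, (S.r q).IsCycle ∧ (S.r q).support.card = n - 1)
    {q a : Fin n} (h : S.op a q = a) : a = q := by
  have hcard : ((S.r q).support)ᶜ.card = 1 := by
    rw [Finset.card_compl, (hprofile q).2, Fintype.card_fin]
    have := q.pos
    omega
  obtain ⟨b, hb⟩ := Finset.card_eq_one.mp hcard
  have ha : a ∈ ((S.r q).support)ᶜ := by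
    simp [Equiv.Perm.notMem_support, r_apply, h]
  have hq : q ∈ ((S.r q).support)ᶜ := by
    simp [Equiv.Perm.notMem_support, r_apply, S.op_self]
  rw [hb, Finset.mem_singleton] at ha hq
  rw [ha, hq]

/-- Conjugation: `r (a * b) = r b * r a * (r b)⁻¹`. -/
lemma r_conj (a b : Fin n) : S.r (S.op a b) = S.r b * S.r a * (S.r b)⁻¹ := by
  apply Equiv.ext
  intro x
  have hx : S.op ((S.r b)⁻¹ x) b = x := (S.r b).apply_symm_apply x
  simp only [Equiv.Perm.mul_apply, r_apply]
  calc S.op x (S.op a b) = S.op (S.op ((S.r b)⁻¹ x) b) (S.op a b) := by rw [hx]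
    _ = S.op (S.op ((S.r b)⁻¹ x) a) b := (S.op_distrib _ _ _).symm

lemma r_pow_conj (i x : Fin n) (d : ℕ) :
    S.r ((S.r i ^ d) x) = (S.r i) ^ d * S.r x * ((S.r i) ^ d)⁻¹ := by
  induction d with
  | zero => simp
  | succ d ih =>
    have h1 : (S.r i ^ (d + 1)) x = S.op ((S.r i ^ d) x) i := by
      rw [pow_succ', Equiv.Perm.mul_apply]; rfl
    rw [h1, r_conj, ih]
    group

end Aux

/-- Theorem 3 of the paper, due to K. Oshiro: a connected quandle
with `n` elements whose profile is `{1, n-1}` (each `r q` is a single cycle of length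
`n - 1` together with the fixed point `q`) is latin: every left translation
`l i : x ↦ i * x` is a bijection (equivalently, every row of the quandle matrix
contains all the elements). -/
theorem latin_of_profile_one_cycle
    {n : ℕ} (S : QuandleOp (Fin n)) (hconn : S.Connected)
    (hprofile : ∀ q : Fin n, (S.r q).IsCycle ∧ (S.r q).support.card = n - 1) :
    ∀ i : Fin n, Function.Bijective fun x => S.op i x := by
  intro i
  rw [← Finite.injective_iff_bijective]
  intro x y hxy
  simp only at hxy
  by_cases hx : x = i
  · rw [hx] at hxy ⊢
    rw [S.op_self] at hxy
    exact fixed_eq S hprofile hxy.symm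
  by_cases hy : y = i
  · rw [hy] at hxy ⊢
    rw [S.op_self] at hxy
    exact (fixed_eq S hprofile hxy).symm
  -- x, y are in the support of the (n-1)-cycle r i
  have hxs : S.r i x ≠ x := fun h => hx (fixed_eq S hprofile h)
  have hys : S.r i y ≠ y := fun h => hy (fixed_eq S hprofile h)
  obtain ⟨d, hd⟩ := (hprofile i).1.exists_pow_eq hxs hys
  have e1 : S.r (S.op i x) = S.r x * S.r i * (S.r x)⁻¹ := r_conj S i x
  have e2 : S.r (S.op i x)
      = (S.r i) ^ d * (S.r x * S.r i * (S.r x)⁻¹) * ((S.r i) ^ d)⁻¹ := by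
    rw [hxy, r_conj S i y, ← hd, r_pow_conj]
    group
  have e3 : S.r (S.op i x)
      = (S.r i) ^ d * S.r (S.op i x) * ((S.r i) ^ d)⁻¹ := by
    rw [← e1] at e2
    exact e2
  have hcomm : (S.r i) ^ d * S.r (S.op i x) = S.r (S.op i x) * (S.r i) ^ d := by
    conv_rhs => rw [e3]
    group
  -- hence (r i)^d (i*x) is a fixed point of r (i*x), so it equals i*x
  have hfz : S.r (S.op i x) ((S.r i ^ d) (S.op i x)) = (S.r i ^ d) (S.op i x) := by
    rw [← Equiv.Perm.mul_apply, ← hcomm, Equiv.Perm.mul_apply, r_apply, S.op_self]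
  have hfix : (S.r i ^ d) (S.op i x) = S.op i x := fixed_eq S hprofile hfz
  -- i*x ≠ i, so i*x is in the support of r i, hence (r i)^d = 1
  have hzi : S.r i (S.op i x) ≠ S.op i x := by
    intro h
    exact hx (fixed_eq S hprofile (fixed_eq S hprofile h)).symm
  have hg1 : (S.r i) ^ d = 1 := ((hprofile i).1.pow_eq_one_iff' hzi).mpr hfix
  rw [hg1] at hd
  simpa using hd
end

section
/- Let Q be a finite connected quandle whose underlying set is {1,2,…,n} and whose profile is {1, ℓ_1, ℓ_2, …, ℓ_k} with 1 ≤ ℓ_1 < ℓ_2 < ⋯ < ℓ_k. Then the total number of natural reorderings of Q (i.e., bijections ν of {1,2,…,n} that are natural reorderings with respect to r_q for some q ∈ Q) is exactly n·ℓ_1·ℓ_2⋯ℓ_k. -/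
/-- A presentation of `r q` as a product of disjoint cycles
`(I s 0 … I s (ℓ s - 1))`, `s = 0, …, k-1`, of weakly increasing lengths `≥ 1`,
together with the fixed point `(q)`. -/
def IsCyclePresentation {n : ℕ} (S : QuandleOp (Fin n)) (q : Fin n)
    {k : ℕ} (ℓ : Fin k → ℕ) (I : (s : Fin k) → Fin (ℓ s) → Fin n) : Prop :=
  (∀ s, 1 ≤ ℓ s) ∧
  Monotone ℓ ∧
  (∑ s, ℓ s) = n - 1 ∧
  Function.Injective (fun p : (s : Fin k) × Fin (ℓ s) => I p.1 p.2) ∧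
  (∀ (s : Fin k) (t : Fin (ℓ s)), I s t ≠ q) ∧
  (∀ (s : Fin k) (t : Fin (ℓ s)),
    S.op (I s t) q = I s ⟨(t.val + 1) % ℓ s, Nat.mod_lt _ (Nat.zero_lt_of_lt t.isLt)⟩)


namespace CNR

/-- Addition of a natural number to a `Fin m`, wrapping around modulo `m`. -/
def fadd {m : ℕ} (t : Fin m) (a : ℕ) : Fin m :=
  ⟨(t.val + a) % m, Nat.mod_lt _ (Nat.zero_lt_of_lt t.isLt)⟩

@[simp] lemma fadd_val {m : ℕ} (t : Fin m) (a : ℕ) : (fadd t a).val = (t.val + a) % m := rfl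

lemma fadd_fadd {m : ℕ} (t : Fin m) (a b : ℕ) : fadd (fadd t a) b = fadd t (a + b) := by
  apply Fin.ext
  simp [Nat.mod_add_mod, Nat.add_assoc]

lemma fadd_mod {m : ℕ} (t : Fin m) (a : ℕ) : fadd t (a % m) = fadd t a := by
  apply Fin.ext
  simp [Nat.add_mod]

lemma fadd_zero {m : ℕ} (t : Fin m) : fadd t 0 = t := by
  apply Fin.ext
  simp [Nat.mod_eq_of_lt t.isLt]

lemma fadd_cancel {m : ℕ} (t : Fin m) (a : ℕ) : fadd (fadd t a) (m - a % m) = t := by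
  have hm : 0 < m := Nat.zero_lt_of_lt t.isLt
  have h1 : a % m < m := Nat.mod_lt _ hm
  rw [fadd_fadd, ← fadd_mod, show (a + (m - a % m)) % m = 0 by
    have h2 : a % m ≤ a := Nat.mod_le _ _
    have h3 : a - a % m = m * (a / m) := by have := Nat.div_add_mod a m; omega
    have : a + (m - a % m) = m * (a / m) + m := by omega
    simp [this, Nat.add_mod, Nat.mul_mod_right], fadd_zero]

lemma fadd_cancel' {m : ℕ} (t : Fin m) (a : ℕ) : fadd (fadd t (m - a % m)) a = t := by
  have hm : 0 < m := Nat.zero_lt_of_lt t.isLt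
  have h1 : a % m < m := Nat.mod_lt _ hm
  rw [fadd_fadd, ← fadd_mod, show (m - a % m + a) % m = 0 by
    have h2 : a % m ≤ a := Nat.mod_le _ _
    have h3 : a - a % m = m * (a / m) := by have := Nat.div_add_mod a m; omega
    have : m - a % m + a = m * (a / m) + m := by omega
    simp [this, Nat.add_mod, Nat.mul_mod_right], fadd_zero]

lemma fadd_reach {m : ℕ} (b u : Fin m) : fadd b (m - b.val + u.val) = u := by
  apply Fin.ext
  show (b.val + (m - b.val + u.val)) % m = u.val
  have hb := b.isLt
  have hu := u.isLt
  rw [show b.val + (m - b.val + u.val) = m + u.val by omega, Nat.add_mod_left,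
    Nat.mod_eq_of_lt hu]

lemma fadd_comm {m : ℕ} (a b : Fin m) : fadd a b.val = fadd b a.val := by
  apply Fin.ext
  simp [Nat.add_comm]

/-- Rotation by `a` as a permutation of `Fin m`. -/
def rotEquiv {m : ℕ} (a : ℕ) : Fin m ≃ Fin m where
  toFun t := fadd t a
  invFun t := fadd t (m - a % m)
  left_inv t := fadd_cancel t a
  right_inv t := fadd_cancel' t a

@[simp] lemma rotEquiv_apply {m : ℕ} (a : ℕ) (t : Fin m) : rotEquiv a t = fadd t a := rfl

@[simp] lemma rotEquiv_symm_apply {m : ℕ} (a : ℕ) (t : Fin m) :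
    (rotEquiv a).symm t = fadd t (m - a % m) := rfl

section psum
variable {k : ℕ} {ℓ : Fin k → ℕ}

lemma sum_Iio_add (s : Fin k) :
    (∑ j ∈ Finset.Iio s, ℓ j) + ℓ s = ∑ j ∈ Finset.Iic s, ℓ j := by
  rw [← Finset.Iio_insert, Finset.sum_insert (by simp)]
  ring

lemma sum_Iic_le (s : Fin k) : (∑ j ∈ Finset.Iic s, ℓ j) ≤ ∑ j, ℓ j :=
  Finset.sum_le_sum_of_subset (Finset.subset_univ _)

lemma psum_add_lt {N : ℕ} (hsum : (∑ s, ℓ s) = N) (s : Fin k) (t : Fin (ℓ s)) :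
    (∑ j ∈ Finset.Iio s, ℓ j) + t.val < N := by
  have h1 := sum_Iio_add (ℓ := ℓ) s
  have h2 := sum_Iic_le (ℓ := ℓ) s
  have h3 := t.isLt
  omega

lemma psum_inj {s s' : Fin k} {t : Fin (ℓ s)} {t' : Fin (ℓ s')}
    (h : (∑ j ∈ Finset.Iio s, ℓ j) + t.val = (∑ j ∈ Finset.Iio s', ℓ j) + t'.val) :
    s = s' ∧ t.val = t'.val := by
  have key : ∀ (a b : Fin k), a < b →
      (∑ j ∈ Finset.Iic a, ℓ j) ≤ ∑ j ∈ Finset.Iio b, ℓ j := by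
    intro a b hab
    exact Finset.sum_le_sum_of_subset (fun j hj => by
      simp only [Finset.mem_Iic, Finset.mem_Iio] at *
      exact lt_of_le_of_lt hj hab)
  rcases lt_trichotomy s s' with hlt | heq | hgt
  · have := key s s' hlt
    have h1 := sum_Iio_add (ℓ := ℓ) s
    have h3 := t.isLt
    omega
  · subst heq
    omega
  · have := key s' s hgt
    have h1 := sum_Iio_add (ℓ := ℓ) s'
    have h3 := t'.isLt
    omega

end psum

section pres

variable {n : ℕ} {S : QuandleOp (Fin n)} {q : Fin n} {k : ℕ} {ℓ : Fin k → ℕ}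
  {I : (s : Fin k) → Fin (ℓ s) → Fin n}

lemma step (hcyc : ∀ (s : Fin k) (t : Fin (ℓ s)),
      S.op (I s t) q = I s ⟨(t.val + 1) % ℓ s, Nat.mod_lt _ (Nat.zero_lt_of_lt t.isLt)⟩)
    (s : Fin k) (t : Fin (ℓ s)) : S.op (I s t) q = I s (fadd t 1) :=
  hcyc s t

lemma iterate_eq (hcyc : ∀ (s : Fin k) (t : Fin (ℓ s)),
      S.op (I s t) q = I s ⟨(t.val + 1) % ℓ s, Nat.mod_lt _ (Nat.zero_lt_of_lt t.isLt)⟩)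
    (m : ℕ) (s : Fin k) (t : Fin (ℓ s)) :
    (fun x => S.op x q)^[m] (I s t) = I s (fadd t m) := by
  induction m with
  | zero => simp [fadd, Nat.mod_eq_of_lt t.isLt]
  | succ m ih =>
      rw [Function.iterate_succ_apply', ih, step hcyc]
      congr 1
      apply Fin.ext
      simp [fadd, Nat.mod_add_mod, Nat.add_assoc]

lemma inj_fixed_s (hinj : Function.Injective
      (fun p : (s : Fin k) × Fin (ℓ s) => I p.1 p.2)) (s : Fin k) :
    Function.Injective (I s) := fun t t' h => by
  have h2 : (⟨s, t⟩ : (s : Fin k) × Fin (ℓ s)) = ⟨s, t'⟩ := hinj h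
  injection h2 with h3 h4

lemma cover (hsum : (∑ s, ℓ s) = n - 1)
    (hinj : Function.Injective (fun p : (s : Fin k) × Fin (ℓ s) => I p.1 p.2))
    (hne : ∀ (s : Fin k) (t : Fin (ℓ s)), I s t ≠ q) :
    ∀ x : Fin n, x ≠ q → ∃ s t, I s t = x := by
  have hU : (Finset.univ.image (fun p : (s : Fin k) × Fin (ℓ s) => I p.1 p.2))
      = Finset.univ.erase q := by
    apply Finset.eq_of_subset_of_card_le
    · intro x hx
      simp only [Finset.mem_image, Finset.mem_univ, true_and] at hx
      obtain ⟨p, hp⟩ := hx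
      exact Finset.mem_erase.mpr ⟨hp ▸ hne p.1 p.2, Finset.mem_univ _⟩
    · rw [Finset.card_erase_of_mem (Finset.mem_univ _),
        Finset.card_image_of_injective _ hinj]
      simp [Fintype.card_sigma, hsum]
  intro x hx
  have : x ∈ Finset.univ.erase q := Finset.mem_erase.mpr ⟨hx, Finset.mem_univ _⟩
  rw [← hU] at this
  simp only [Finset.mem_image, Finset.mem_univ, true_and] at this
  obtain ⟨p, hp⟩ := this
  exact ⟨p.1, p.2, hp⟩

variable {k' : ℕ} {ℓ' : Fin k' → ℕ} {I' : (s : Fin k') → Fin (ℓ' s) → Fin n}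

lemma image_subset_of_eq
    (hcyc : ∀ (s : Fin k) (t : Fin (ℓ s)),
      S.op (I s t) q = I s ⟨(t.val + 1) % ℓ s, Nat.mod_lt _ (Nat.zero_lt_of_lt t.isLt)⟩)
    (hcyc' : ∀ (s : Fin k') (t : Fin (ℓ' s)),
      S.op (I' s t) q = I' s ⟨(t.val + 1) % ℓ' s, Nat.mod_lt _ (Nat.zero_lt_of_lt t.isLt)⟩)
    {s : Fin k} {s' : Fin k'} {a : Fin (ℓ s)} {b : Fin (ℓ' s')}
    (h : I s a = I' s' b) :
    Finset.univ.image (I' s') ⊆ Finset.univ.image (I s) := by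
  intro x hx
  simp only [Finset.mem_image, Finset.mem_univ, true_and] at hx ⊢
  obtain ⟨u, rfl⟩ := hx
  refine ⟨fadd a (ℓ' s' - b.val + u.val), ?_⟩
  have e1 : I' s' u = (fun x => S.op x q)^[ℓ' s' - b.val + u.val] (I' s' b) := by
    rw [iterate_eq hcyc', fadd_reach]
  rw [e1, ← h, iterate_eq hcyc]

lemma image_eq
    (hcyc : ∀ (s : Fin k) (t : Fin (ℓ s)),
      S.op (I s t) q = I s ⟨(t.val + 1) % ℓ s, Nat.mod_lt _ (Nat.zero_lt_of_lt t.isLt)⟩)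
    (hcyc' : ∀ (s : Fin k') (t : Fin (ℓ' s)),
      S.op (I' s t) q = I' s ⟨(t.val + 1) % ℓ' s, Nat.mod_lt _ (Nat.zero_lt_of_lt t.isLt)⟩)
    {s : Fin k} {s' : Fin k'} {a : Fin (ℓ s)} {b : Fin (ℓ' s')}
    (h : I s a = I' s' b) :
    Finset.univ.image (I s) = Finset.univ.image (I' s') :=
  Finset.Subset.antisymm (image_subset_of_eq hcyc' hcyc h.symm)
    (image_subset_of_eq hcyc hcyc' h)

lemma len_eq_of_eq
    (hp : IsCyclePresentation S q ℓ I) (hp' : IsCyclePresentation S q ℓ' I')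
    {s : Fin k} {s' : Fin k'} {a : Fin (ℓ s)} {b : Fin (ℓ' s')}
    (h : I s a = I' s' b) : ℓ s = ℓ' s' := by
  obtain ⟨h1, hmono, hsum, hinj, hne, hcyc⟩ := hp
  obtain ⟨h1', hmono', hsum', hinj', hne', hcyc'⟩ := hp'
  have himg := image_eq hcyc hcyc' h
  have c1 : (Finset.univ.image (I s)).card = ℓ s := by
    rw [Finset.card_image_of_injective _ (inj_fixed_s hinj s)]
    simp
  have c2 : (Finset.univ.image (I' s')).card = ℓ' s' := by
    rw [Finset.card_image_of_injective _ (inj_fixed_s hinj' s')]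
    simp
  rw [← c1, ← c2, himg]

/-- Lemma A: a second cycle presentation has the same number of cycles and the same
lengths, provided the first one has strictly increasing lengths. -/
lemma pres_unique_len
    (hp : IsCyclePresentation S q ℓ I) (hstrict : StrictMono ℓ)
    (hp' : IsCyclePresentation S q ℓ' I') :
    ∃ _ : k' = k, ∀ (s' : Fin k') (h : s'.val < k), ℓ' s' = ℓ ⟨s'.val, h⟩ := by
  obtain ⟨h1, hmono, hsum, hinj, hne, hcyc⟩ := hp
  obtain ⟨h1', hmono', hsum', hinj', hne', hcyc'⟩ := hp'
  have hpp : IsCyclePresentation S q ℓ I := ⟨h1, hmono, hsum, hinj, hne, hcyc⟩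
  have hpp' : IsCyclePresentation S q ℓ' I' := ⟨h1', hmono', hsum', hinj', hne', hcyc'⟩
  choose F D hFD using fun s' : Fin k' =>
    cover hsum hinj hne (I' s' ⟨0, h1' s'⟩) (hne' s' ⟨0, h1' s'⟩)
  have hlen : ∀ s', ℓ (F s') = ℓ' s' := fun s' =>
    len_eq_of_eq hpp hpp' (hFD s')
  have Finj : Function.Injective F := by
    intro s1 s2 h12
    have e1 := image_eq hcyc hcyc' (hFD s1)
    have e2 := image_eq hcyc hcyc' (hFD s2)
    rw [h12, e2] at e1
    have hz : I' s2 ⟨0, h1' s2⟩ ∈ Finset.univ.image (I' s2) := by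
      simp only [Finset.mem_image, Finset.mem_univ, true_and]
      exact ⟨_, rfl⟩
    rw [e1] at hz
    simp only [Finset.mem_image, Finset.mem_univ, true_and] at hz
    obtain ⟨u, hu⟩ := hz
    have h2 : (⟨s1, u⟩ : (s : Fin k') × Fin (ℓ' s)) = ⟨s2, ⟨0, h1' s2⟩⟩ := hinj' hu
    exact congrArg Sigma.fst h2
  have Fsurj : Function.Surjective F := by
    have himg : Finset.univ.image F = Finset.univ := by
      by_contra hne2
      obtain ⟨s0, _, hs0⟩ := Finset.exists_of_ssubset
        (ssubset_of_subset_of_ne (Finset.subset_univ _) hne2)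
      have hlt : (∑ s ∈ Finset.univ.image F, ℓ s) < ∑ s, ℓ s :=
        Finset.sum_lt_sum_of_subset (Finset.subset_univ _) (Finset.mem_univ s0) hs0
          (h1 s0) (fun _ _ _ => Nat.zero_le _)
      rw [Finset.sum_image (fun a _ b _ h => Finj h)] at hlt
      simp only [hlen] at hlt
      omega
    intro s
    have : s ∈ Finset.univ.image F := himg ▸ Finset.mem_univ s
    simp only [Finset.mem_image, Finset.mem_univ, true_and] at this
    exact this
  have hk : k' = k := by
    have := Fintype.card_of_bijective ⟨Finj, Fsurj⟩
    simpa using this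
  subst hk
  have Fmono : Monotone F := by
    intro a b hab
    by_contra hnot
    push_neg at hnot
    have h2 : ℓ (F b) < ℓ (F a) := hstrict hnot
    have h3 : ℓ' a ≤ ℓ' b := hmono' hab
    rw [hlen, hlen] at h2
    omega
  have Fid : F = id := by
    have hsm : StrictMono F := Fmono.strictMono_of_injective Finj
    haveI : WellFoundedLT (Fin k') := inferInstance
    exact (StrictMono.range_inj (β := Fin k') (γ := Fin k') hsm strictMono_id).1
      (by rw [Set.range_eq_univ.mpr Fsurj, Set.range_id])
  refine ⟨rfl, fun s' h => ?_⟩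
  rw [← hlen s', Fid]
  simp [Fin.eta]

/-- Lemma B: a second cycle presentation with the same (strictly increasing) lengths
consists of rotations of the cycles of the first. -/
lemma pres_unique_rot {I' : (s : Fin k) → Fin (ℓ s) → Fin n}
    (hp : IsCyclePresentation S q ℓ I) (hstrict : StrictMono ℓ)
    (hp' : IsCyclePresentation S q ℓ I') (s : Fin k) :
    ∃ d : Fin (ℓ s), ∀ u, I' s u = I s (fadd d u.val) := by
  obtain ⟨h1, hmono, hsum, hinj, hne, hcyc⟩ := hp
  obtain ⟨h1', hmono', hsum', hinj', hne', hcyc'⟩ := hp'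
  have hpp : IsCyclePresentation S q ℓ I := ⟨h1, hmono, hsum, hinj, hne, hcyc⟩
  have hpp' : IsCyclePresentation S q ℓ I' := ⟨h1', hmono', hsum', hinj', hne', hcyc'⟩
  obtain ⟨s0, d, hd⟩ := cover hsum hinj hne (I' s ⟨0, h1' s⟩) (hne' s ⟨0, h1' s⟩)
  have hs0 : s0 = s := hstrict.injective (len_eq_of_eq hpp hpp' hd)
  subst s0
  refine ⟨d, fun u => ?_⟩
  have e1 : I' s u = (fun x => S.op x q)^[u.val] (I' s ⟨0, h1' s⟩) := by
    rw [iterate_eq hcyc', show fadd ⟨0, h1' s⟩ u.val = u from Fin.ext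
      (by simp [Nat.mod_eq_of_lt u.isLt])]
  rw [e1, ← hd, iterate_eq hcyc]

end pres
end CNR

/-- if a finite connected quandle on `{1,…,n}` has profile
`{1, ℓ 0, …, ℓ (k-1)}` with `1 ≤ ℓ 0 < ℓ 1 < ⋯ < ℓ (k-1)`, then the number of natural
reorderings (with respect to `r q` for some `q`) is exactly `n * ℓ 0 * ⋯ * ℓ (k-1)`. -/
theorem card_natural_reorderings
    {n k : ℕ} (S : QuandleOp (Fin n)) (hconn : S.Connected)
    (ℓ : Fin k → ℕ) (hstrict : StrictMono ℓ)
    (hprofile : ∀ q : Fin n, ∃ I, IsCyclePresentation S q ℓ I) :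
    {ν : Equiv.Perm (Fin n) | ∃ q : Fin n, IsNaturalReordering S q ν}.ncard
      = n * ∏ s, ℓ s := by
  classical
  rcases Nat.eq_zero_or_pos n with hn | hn
  · subst hn
    have hempty : {ν : Equiv.Perm (Fin 0) | ∃ q : Fin 0, IsNaturalReordering S q ν} = ∅ :=
      Set.eq_empty_iff_forall_notMem.mpr (by rintro ν ⟨q, -⟩; exact q.elim0)
    rw [hempty]
    simp
  choose Ifun hI using hprofile
  obtain ⟨h1, hmono, hsum, -, -, -⟩ := hI ⟨0, hn⟩
  have htoplt : n - 1 < n := by omega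
  have hblt : ∀ (s : Fin k) (t : Fin (ℓ s)), (∑ j ∈ Finset.Iio s, ℓ j) + t.val < n - 1 :=
    fun s t => CNR.psum_add_lt hsum s t
  set ψ : ((s : Fin k) × Fin (ℓ s)) ⊕ Unit → Fin n :=
    Sum.elim (fun p => ⟨(∑ j ∈ Finset.Iio p.1, ℓ j) + p.2.val, lt_trans (hblt p.1 p.2) htoplt⟩)
      (fun _ => ⟨n - 1, htoplt⟩) with hψ
  have hcard : Fintype.card (((s : Fin k) × Fin (ℓ s)) ⊕ Unit) = Fintype.card (Fin n) := by
    simp only [Fintype.card_sum, Fintype.card_sigma, Fintype.card_fin, Fintype.card_unit]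
    rw [hsum]
    omega
  have hψbij : Function.Bijective ψ := by
    refine (Fintype.bijective_iff_injective_and_card _).mpr ⟨?_, hcard⟩
    rintro (⟨s, t⟩ | u) (⟨s', t'⟩ | u') h <;>
      simp only [hψ, Sum.elim_inl, Sum.elim_inr, Fin.mk.injEq] at h
    · obtain ⟨hs, ht⟩ := CNR.psum_inj h
      subst hs
      cases Fin.ext ht
      rfl
    · exact absurd h (by have := hblt s t; omega)
    · exact absurd h.symm (by have := hblt s' t'; omega)
    · rfl
  set φ : Fin n → ((s : Fin k) × Fin (ℓ s)) ⊕ Unit → Fin n :=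
    fun q => Sum.elim (fun p => Ifun q p.1 p.2) (fun _ => q) with hφ
  have hφbij : ∀ q, Function.Bijective (φ q) := by
    intro q
    obtain ⟨-, -, -, hinj, hne, -⟩ := hI q
    refine (Fintype.bijective_iff_injective_and_card _).mpr ⟨?_, hcard⟩
    rintro (p | u) (p' | u') h <;> simp only [hφ, Sum.elim_inl, Sum.elim_inr] at h
    · exact congrArg Sum.inl (hinj h)
    · exact absurd h (hne p.1 p.2)
    · exact absurd h.symm (hne p'.1 p'.2)
    · rfl
  set EQ : (q : Fin n) → ((((s : Fin k) × Fin (ℓ s)) ⊕ Unit) ≃ Fin n) :=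
    fun q => Equiv.ofBijective _ (hφbij q) with hEQ
  set F0 : (((s : Fin k) × Fin (ℓ s)) ⊕ Unit) ≃ Fin n := Equiv.ofBijective _ hψbij with hF0
  set bfun : Fin n × ((s : Fin k) → Fin (ℓ s)) → Equiv.Perm (Fin n) :=
    fun p => (EQ p.1).symm.trans ((Equiv.sumCongr
      (Equiv.sigmaCongrRight fun s => CNR.rotEquiv (p.2 s).val) (Equiv.refl Unit)).trans F0)
    with hbfun
  have hEQsymm_q : ∀ q, (EQ q).symm q = Sum.inr () := fun q => by
    rw [Equiv.symm_apply_eq]; rfl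
  have hEQsymm_I : ∀ q s t, (EQ q).symm (Ifun q s t) = Sum.inl ⟨s, t⟩ := fun q s t => by
    rw [Equiv.symm_apply_eq]; rfl
  have hb_q : ∀ (q : Fin n) c, bfun (q, c) q = ⟨n - 1, htoplt⟩ := by
    intro q c
    simp only [hbfun, Equiv.trans_apply, hEQsymm_q]
    rfl
  have hb_I : ∀ (q : Fin n) c s (t : Fin (ℓ s)), bfun (q, c) (Ifun q s t) =
      ⟨(∑ j ∈ Finset.Iio s, ℓ j) + (CNR.fadd t (c s).val).val,
        lt_trans (hblt s _) htoplt⟩ := by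
    intro q c s t
    simp only [hbfun, Equiv.trans_apply, hEQsymm_I]
    rfl
  have hmem : ∀ p : Fin n × ((s : Fin k) → Fin (ℓ s)),
      ∃ q, IsNaturalReordering S q (bfun p) := by
    rintro ⟨q, c⟩
    obtain ⟨-, -, -, hinj, hne, hcyc⟩ := hI q
    refine ⟨q, k, ℓ, fun s t => Ifun q s ((CNR.rotEquiv (c s).val).symm t),
      ?_, h1, hmono, hsum, ?_, ?_, ?_, ?_⟩
    · rw [hb_q q c]
    · rintro ⟨s, t⟩ ⟨s', t'⟩ h
      have h2 : (⟨s, (CNR.rotEquiv (c s).val).symm t⟩ : (s : Fin k) × Fin (ℓ s))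
          = ⟨s', (CNR.rotEquiv (c s').val).symm t'⟩ := hinj h
      obtain ⟨hs, ht⟩ := Sigma.mk.inj_iff.mp h2
      subst hs
      have ht2 : (CNR.rotEquiv (c s).val).symm t = (CNR.rotEquiv (c s).val).symm t' :=
        eq_of_heq ht
      cases (Equiv.injective _) ht2
      rfl
    · exact fun s t => hne s _
    · intro s t
      rw [CNR.step hcyc]
      congr 1
      apply Fin.ext
      simp only [CNR.fadd_val, CNR.rotEquiv_symm_apply, Nat.mod_add_mod]
      congr 1
      omega
    · intro s t
      rw [hb_I q c s ((CNR.rotEquiv (c s).val).symm t)]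
      simp only [CNR.rotEquiv_symm_apply, CNR.fadd_cancel']
  have hbinj : Function.Injective bfun := by
    rintro ⟨q, c⟩ ⟨q', c'⟩ h
    have hq : q = q' := by
      by_contra hne2
      obtain ⟨-, -, hsum', hinj', hne', -⟩ := hI q'
      obtain ⟨s, t, ht⟩ := CNR.cover hsum' hinj' hne' q hne2
      have e1 : bfun (q, c) q = ⟨n - 1, htoplt⟩ := hb_q q c
      rw [h, ← ht, hb_I q' c' s t] at e1
      have e2 := congrArg Fin.val e1
      simp only at e2
      have h2 := hblt s (CNR.fadd t (c' s).val)
      omega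
    subst hq
    have hc : c = c' := by
      funext s
      have hz : (0 : ℕ) < ℓ s := h1 s
      have e1 : bfun (q, c) (Ifun q s ⟨0, hz⟩) = bfun (q, c') (Ifun q s ⟨0, hz⟩) := by rw [h]
      rw [hb_I q c s ⟨0, hz⟩, hb_I q c' s ⟨0, hz⟩] at e1
      have e2 := congrArg Fin.val e1
      simp only [CNR.fadd_val] at e2
      have hcs := (c s).isLt
      have hcs' := (c' s).isLt
      rw [Nat.zero_add, Nat.zero_add, Nat.mod_eq_of_lt hcs, Nat.mod_eq_of_lt hcs'] at e2
      exact Fin.ext (by omega)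
    rw [hc]
  have hsurj : ∀ ν ∈ {ν : Equiv.Perm (Fin n) | ∃ q : Fin n, IsNaturalReordering S q ν},
      ∃ p, bfun p = ν := by
    rintro ν ⟨q, k', ℓ', I', hq0, h1', hmono', hsum', hinj', hne', hcyc', hval'⟩
    have hp : IsCyclePresentation S q ℓ (Ifun q) := hI q
    have hp' : IsCyclePresentation S q ℓ' I' := ⟨h1', hmono', hsum', hinj', hne', hcyc'⟩
    obtain ⟨hk, hlen⟩ := CNR.pres_unique_len hp hstrict hp'
    subst hk
    have hll : ℓ' = ℓ := funext fun s =>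
      (hlen s s.isLt).trans (congrArg ℓ (Fin.eta s s.isLt))
    subst hll
    have hp'2 : IsCyclePresentation S q ℓ' I' := ⟨h1', hmono', hsum', hinj', hne', hcyc'⟩
    choose d hd using fun s => CNR.pres_unique_rot hp hstrict hp'2 s
    refine ⟨(q, fun s => ⟨(ℓ' s - (d s).val % ℓ' s) % ℓ' s, Nat.mod_lt _ (h1 s)⟩), ?_⟩
    apply Equiv.ext
    intro x
    rcases eq_or_ne x q with rfl | hxq
    · rw [hb_q]
      exact Fin.ext (by rw [hq0])
    · obtain ⟨-, -, hsumq, hinjq, hneq, -⟩ := hI q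
      obtain ⟨s, v, rfl⟩ := CNR.cover hsumq hinjq hneq x hxq
      rw [hb_I]
      have hu : I' s ((CNR.rotEquiv (d s).val).symm v) = Ifun q s v := by
        rw [hd s]
        congr 1
        apply Fin.ext
        simp only [CNR.fadd_val, CNR.rotEquiv_symm_apply]
        have hdlt := (d s).isLt
        have hvlt := v.isLt
        rw [Nat.add_mod_mod,
          show (d s).val + (v.val + (ℓ' s - (d s).val % ℓ' s)) = v.val + ℓ' s by
            rw [Nat.mod_eq_of_lt hdlt]; omega,
          Nat.add_mod_right, Nat.mod_eq_of_lt hvlt]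
      rw [← hu]
      apply Fin.ext
      rw [hval' s _]
      simp only [CNR.fadd_val, CNR.rotEquiv_symm_apply, Nat.add_mod_mod]
  have hset : {ν : Equiv.Perm (Fin n) | ∃ q : Fin n, IsNaturalReordering S q ν}
      = Set.range bfun := by
    apply Set.Subset.antisymm
    · intro ν hν
      obtain ⟨p, hp⟩ := hsurj ν hν
      exact ⟨p, hp⟩
    · rintro ν ⟨p, rfl⟩
      exact hmem p
  rw [hset, ← Nat.card_coe_set_eq, Nat.card_range_of_injective hbinj,
    Nat.card_eq_fintype_card]
  simp [Fintype.card_pi]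
end
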